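/- If w is a finite rich word, then its palindromic closure w^(+) = v·u·reverse(v), where w = vu with u the longest palindromic suffix of w, is also rich. -/

import Mathlib

/-- A word is a palindrome if it equals its reversal. -/
def Palindromic {α : Type*} (w : List α) : Prop := w.reverse = w

/-- A finite word is rich if it has exactly |w|+1 distinct palindromic factors
(including the empty word). -/
def Rich {α : Type*} (w : List α) : Prop :=
  {p : List α | p <:+: w ∧ Palindromic p}.ncard = w.length + 1

/-- A word is square-free if it has no factor of the form `u ++ u` with `u` nonempty. -/
def SqFree {α : Type*} (w : List α) : Prop :=
  ∀ u : List α, u ≠ [] → ¬ (u ++ u) <:+: w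

namespace PalClosureAux

variable {α : Type*}

/-- The set of palindromic factors of a word. -/
def palSet (x : List α) : Set (List α) := {p : List α | p <:+: x ∧ Palindromic p}

lemma palSet_finite (x : List α) : (palSet x).Finite := by
  apply Set.Finite.subset (List.finite_toSet x.sublists)
  intro p hp
  simpa using hp.1.sublist

lemma palSet_mono {x y : List α} (h : x <:+: y) : palSet x ⊆ palSet y :=
  fun _ hp => ⟨hp.1.trans h, hp.2⟩

/-- An infix is either a suffix or an infix of `dropLast`. -/
lemma infix_suffix_or_dropLast {p x : List α} (h : p <:+: x) :
    p <:+ x ∨ p <:+: x.dropLast := by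
  obtain ⟨s, t, rfl⟩ := h
  rcases eq_or_ne t [] with rfl | ht
  · exact Or.inl ⟨s, by simp⟩
  · exact Or.inr ⟨s, t.dropLast, by rw [List.dropLast_append_of_ne_nil ht]⟩

/-- A proper prefix of a suffix is an infix of `dropLast`. -/
lemma infix_dropLast_of_prefix_suffix {p q x : List α} (hpq : p <+: q) (hq : q <:+ x)
    (hlt : p.length < q.length) : p <:+: x.dropLast := by
  obtain ⟨r, rfl⟩ := hpq
  obtain ⟨t, rfl⟩ := hq
  have hr : r ≠ [] := by
    intro hr; rw [hr] at hlt; simp at hlt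
  rw [← List.append_assoc, List.dropLast_append_of_ne_nil hr]
  exact ⟨t, r.dropLast, by simp⟩

/-- A palindromic suffix of a palindrome is also a prefix. -/
lemma prefix_of_palindromic_suffix {p q : List α} (h : p <:+ q)
    (hp : Palindromic p) (hq : Palindromic q) : p <+: q := by
  have := List.reverse_prefix.mpr h
  rwa [hp, hq] at this

/-- Appending a letter: any new palindromic factor is unique
(all palindromic factors of `y ++ [a]` that are not factors of `y` coincide). -/
lemma new_pal_subsingleton (y : List α) (a : α) :
    (palSet (y ++ [a]) \ palSet y).Subsingleton := by
  rintro p ⟨⟨hpx, hpal⟩, hpy⟩ q ⟨⟨hqx, hqal⟩, hqy⟩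
  -- both are suffixes of y ++ [a]
  have hps : p <:+ y ++ [a] := by
    rcases infix_suffix_or_dropLast hpx with h | h
    · exact h
    · rw [List.dropLast_concat] at h
      exact absurd ⟨h, hpal⟩ hpy
  have hqs : q <:+ y ++ [a] := by
    rcases infix_suffix_or_dropLast hqx with h | h
    · exact h
    · rw [List.dropLast_concat] at h
      exact absurd ⟨h, hqal⟩ hqy
  -- wlog-style symmetric argument
  have key : ∀ p q : List α, p <:+ y ++ [a] → q <:+ y ++ [a] → Palindromic p → Palindromic q →
      ¬ p ∈ palSet y → p.length ≤ q.length → p = q := by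
    intro p q hps hqs hpal hqal hpy hle
    have hsub : p <:+ q := List.suffix_of_suffix_length_le hps hqs hle
    rcases eq_or_lt_of_le hle with heq | hlt
    · exact hsub.eq_of_length heq
    · have hpre : p <+: q := prefix_of_palindromic_suffix hsub hpal hqal
      have : p <:+: (y ++ [a]).dropLast := infix_dropLast_of_prefix_suffix hpre hqs hlt
      rw [List.dropLast_concat] at this
      exact absurd ⟨this, hpal⟩ hpy
  rcases le_total p.length q.length with h | h
  · exact key p q hps hqs hpal hqal (fun hc => hpy ⟨hc.1, hpal⟩) h
  · exact (key q p hqs hps hqal hpal (fun hc => hqy ⟨hc.1, hqal⟩) h).symm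

/-- Any word of length `n` has at most `n + 1` distinct palindromic factors. -/
lemma palSet_ncard_le (x : List α) : (palSet x).ncard ≤ x.length + 1 := by
  induction x using List.reverseRecOn with
  | nil =>
    have : palSet (α := α) [] = {[]} := by
      ext p
      simp only [palSet, Set.mem_setOf_eq, Set.mem_singleton_iff]
      constructor
      · rintro ⟨h, -⟩; exact List.eq_nil_of_infix_nil h
      · rintro rfl; exact ⟨List.infix_refl _, by simp [Palindromic]⟩
    simp [this]
  | append_singleton y a ih =>
    have hsplit : palSet (y ++ [a]) ⊆ palSet y ∪ (palSet (y ++ [a]) \ palSet y) := by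
      intro p hp
      by_cases h : p ∈ palSet y
      · exact Or.inl h
      · exact Or.inr ⟨hp, h⟩
    calc (palSet (y ++ [a])).ncard
        ≤ (palSet y ∪ (palSet (y ++ [a]) \ palSet y)).ncard :=
          Set.ncard_le_ncard hsplit
            (((palSet_finite y).union ((palSet_finite (y ++ [a])).diff)))
      _ ≤ (palSet y).ncard + (palSet (y ++ [a]) \ palSet y).ncard := Set.ncard_union_le _ _
      _ ≤ (y.length + 1) + 1 := by
          gcongr
          exact (Set.ncard_le_one_iff ((palSet_finite (y ++ [a])).diff)).mpr
            fun ha hb => new_pal_subsingleton y a ha hb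
      _ = (y ++ [a]).length + 1 := by simp

end PalClosureAux

open PalClosureAux in
theorem palindromic_closure_rich {α : Type*} (w v u : List α)
    (hrich : Rich w) (hw : w = v ++ u) (hpal : Palindromic u)
    (hlongest : ∀ u' : List α, u' <:+ w → Palindromic u' → u'.length ≤ u.length) :
    Rich (v ++ u ++ v.reverse) := by
  rcases eq_or_ne v [] with rfl | hv
  · rw [hw] at hrich
    simpa [Rich] using hrich
  -- w is nonempty
  have hwne : w ≠ [] := by
    rw [hw]; simp [hv]
  -- richness in terms of palSet
  have hrich' : (palSet w).ncard = w.length + 1 := hrich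
  -- u is a suffix of w
  have hu : u <:+ w := ⟨v, hw.symm⟩
  -- Key: u does not occur in w.dropLast (unioccurrence)
  have huni : ¬ u <:+: w.dropLast := by
    intro hocc
    -- every palindromic factor of w is a factor of w.dropLast
    have hsub : palSet w ⊆ palSet w.dropLast := by
      rintro p ⟨hpw, hpal'⟩
      rcases infix_suffix_or_dropLast hpw with hps | hpd
      · -- p is a palindromic suffix of w, so p <:+ u
        have hlen : p.length ≤ u.length := hlongest p hps hpal'
        have hpu : p <:+ u := List.suffix_of_suffix_length_le hps hu hlen
        rcases eq_or_lt_of_le hlen with heq | hlt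
        · have : p = u := hpu.eq_of_length heq
          exact ⟨this ▸ hocc, hpal'⟩
        · have hpre : p <+: u := prefix_of_palindromic_suffix hpu hpal' hpal
          exact ⟨infix_dropLast_of_prefix_suffix hpre hu hlt, hpal'⟩
      · exact ⟨hpd, hpal'⟩
    have hle : (palSet w).ncard ≤ (palSet w.dropLast).ncard :=
      Set.ncard_le_ncard hsub (palSet_finite _)
    have hle2 := palSet_ncard_le w.dropLast
    rw [hrich'] at hle
    have : w.dropLast.length = w.length - 1 := by simp
    have hwpos : 0 < w.length := List.length_pos_iff_ne_nil.mpr hwne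
    omega
  set W := v ++ u ++ v.reverse with hW
  -- the new palindromes
  set f : ℕ → List α := fun i => (v.drop i) ++ u ++ (v.drop i).reverse with hf
  set N : Set (List α) := f '' ↑(Finset.range v.length) with hN
  -- each f i (i < |v|) is a palindromic factor of W
  have hfmem : ∀ i < v.length, f i ∈ palSet W := by
    intro i hi
    constructor
    · refine ⟨v.take i, (v.take i).reverse, ?_⟩
      show v.take i ++ f i ++ (v.take i).reverse = W
      simp only [hf, hW, List.append_assoc]
      rw [← List.append_assoc (v.take i) (v.drop i), List.take_append_drop,
        ← List.reverse_append, List.take_append_drop]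
    · simp only [hf, Palindromic, List.reverse_append, List.reverse_reverse]
      rw [hpal]
      simp [List.append_assoc]
  -- each f i (i < |v|) is NOT a palindromic factor of w
  have hfnot : ∀ i < v.length, f i ∉ palSet w := by
    intro i hi hmem
    apply huni
    obtain ⟨s, t, hst⟩ := hmem.1
    have hdne : (v.drop i) ≠ [] := by
      intro h
      have := congrArg List.length h
      simp at this
      omega
    have : w = (s ++ v.drop i) ++ u ++ ((v.drop i).reverse ++ t) := by
      rw [← hst]; simp [hf, List.append_assoc]
    rw [this, List.dropLast_append_of_ne_nil (by simp [hdne])]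
    exact ⟨s ++ v.drop i, ((v.drop i).reverse ++ t).dropLast, by simp [List.append_assoc]⟩
  -- w's palindromic factors are factors of W
  have hwW : palSet w ⊆ palSet W := by
    apply palSet_mono
    rw [hw]
    exact ⟨[], v.reverse, by simp [hW]⟩
  -- N has exactly |v| elements
  have hinj : Set.InjOn f ↑(Finset.range v.length) := by
    intro i hi j hj hij
    simp only [Finset.coe_range, Set.mem_Iio] at hi hj
    have := congrArg List.length hij
    simp only [hf, List.length_append, List.length_reverse, List.length_drop] at this
    omega
  have hNcard : N.ncard = v.length := by
    rw [hN, Set.ncard_image_of_injOn hinj, Set.ncard_coe_finset, Finset.card_range]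
  -- disjointness
  have hdisj : Disjoint (palSet w) N := by
    rw [Set.disjoint_right]
    rintro p ⟨i, hi, rfl⟩
    simp only [Finset.coe_range, Set.mem_Iio] at hi
    exact hfnot i hi
  -- union is inside palSet W
  have hunion : palSet w ∪ N ⊆ palSet W := by
    apply Set.union_subset hwW
    rintro p ⟨i, hi, rfl⟩
    simp only [Finset.coe_range, Set.mem_Iio] at hi
    exact hfmem i hi
  have hNfin : N.Finite := Set.Finite.image _ (Finset.finite_toSet _)
  have hlower : w.length + 1 + v.length ≤ (palSet W).ncard := by
    have h1 : (palSet w ∪ N).ncard = (palSet w).ncard + N.ncard :=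
      Set.ncard_union_eq hdisj (palSet_finite w) hNfin
    have h2 : (palSet w ∪ N).ncard ≤ (palSet W).ncard :=
      Set.ncard_le_ncard hunion (palSet_finite W)
    rw [h1, hrich', hNcard] at h2
    exact h2
  have hupper := palSet_ncard_le W
  have hWlen : W.length = w.length + v.length := by
    simp [hW, hw]; omega
  show (palSet W).ncard = W.length + 1
  omega
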